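/- Every unit of the Tate algebra F⟨t⟩ over a complete non-archimedean field F can be written in the form u·f(t) where u ∈ F× and f ∈ F⟨t⟩ satisfies f(0) = 1 and ‖f - 1‖ < 1 (Gauss norm). -/

import Mathlib

open Filter PowerSeries

/-- A power series is restricted (lies in the Tate algebra `F⟨t⟩`) if its
coefficients tend to zero. -/
def IsRestricted {F : Type*} [NontriviallyNormedField F] (f : PowerSeries F) : Prop :=
  Tendsto (fun k => ‖PowerSeries.coeff k f‖) atTop (nhds 0)

/-- The Gauss norm `‖∑ cₖ tᵏ‖ = sup |cₖ|` of a power series. -/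
noncomputable def gaussNorm {F : Type*} [NontriviallyNormedField F]
    (f : PowerSeries F) : ℝ :=
  ⨆ k : ℕ, ‖PowerSeries.coeff k f‖

/-- For a nonzero restricted power series, there is a largest index at which the
maximum coefficient norm is attained. -/
lemma exists_max_index {F : Type*} [NontriviallyNormedField F] {f : PowerSeries F}
    (hres : IsRestricted f) (hf : f ≠ 0) :
    ∃ N, (∀ k, ‖PowerSeries.coeff k f‖ ≤ ‖PowerSeries.coeff N f‖) ∧
      ∀ k, N < k → ‖PowerSeries.coeff k f‖ < ‖PowerSeries.coeff N f‖ := by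
  classical
  have hex : ∃ n, PowerSeries.coeff n f ≠ 0 := by
    by_contra h
    push_neg at h
    exact hf (PowerSeries.ext fun n => by simpa using h n)
  obtain ⟨n₀, hn₀⟩ := hex
  have hc : (0 : ℝ) < ‖PowerSeries.coeff n₀ f‖ := norm_pos_iff.mpr hn₀
  obtain ⟨M, hM⟩ := Filter.eventually_atTop.mp (hres.eventually (Iio_mem_nhds hc))
  set B := max M (n₀ + 1) with hB
  have hn₀mem : n₀ ∈ Finset.range B :=
    Finset.mem_range.mpr (lt_of_lt_of_le (Nat.lt_succ_self _) (le_max_right _ _))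
  have hsne : (Finset.range B).Nonempty := ⟨n₀, hn₀mem⟩
  obtain ⟨j, hj, hjmax⟩ :=
    Finset.exists_max_image (Finset.range B) (fun k => ‖PowerSeries.coeff k f‖) hsne
  have hout : ∀ k, k ∉ Finset.range B → ‖PowerSeries.coeff k f‖ < ‖PowerSeries.coeff n₀ f‖ := by
    intro k hk
    have hkB : B ≤ k := le_of_not_gt (fun h => hk (Finset.mem_range.mpr h))
    exact hM k (le_trans (le_max_left _ _) hkB)
  set T := (Finset.range B).filter
    (fun k => ‖PowerSeries.coeff j f‖ ≤ ‖PowerSeries.coeff k f‖) with hTdef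
  have hjT : j ∈ T := Finset.mem_filter.mpr ⟨hj, le_refl _⟩
  have hT : T.Nonempty := ⟨j, hjT⟩
  refine ⟨T.max' hT, ?_, ?_⟩
  · have hNT := T.max'_mem hT
    obtain ⟨hNmem, hNge⟩ := Finset.mem_filter.mp hNT
    intro k
    by_cases hk : k ∈ Finset.range B
    · exact le_trans (hjmax k hk) hNge
    · exact le_trans (le_of_lt (hout k hk)) (le_trans (hjmax n₀ hn₀mem) hNge)
  · have hNT := T.max'_mem hT
    obtain ⟨hNmem, hNge⟩ := Finset.mem_filter.mp hNT
    intro k hk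
    by_cases hkB : k ∈ Finset.range B
    · have hknT : k ∉ T := fun hkT => absurd (T.le_max' k hkT) (not_le.mpr hk)
      have : ¬ (‖PowerSeries.coeff j f‖ ≤ ‖PowerSeries.coeff k f‖) := by
        intro hle
        exact hknT (Finset.mem_filter.mpr ⟨hkB, hle⟩)
      exact lt_of_lt_of_le (not_le.mp this) hNge
    · exact lt_of_lt_of_le (hout k hkB) (le_trans (hjmax n₀ hn₀mem) hNge)

/-- In an ultrametric field, a finite sum with a strictly dominant term has the norm
of that term. -/
lemma norm_sum_eq_dominant {F : Type*} [NontriviallyNormedField F] [IsUltrametricDist F]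
    {ι : Type*} [DecidableEq ι] {s : Finset ι} {a : ι → F} {i₀ : ι} (hi : i₀ ∈ s)
    (h : ∀ i ∈ s, i ≠ i₀ → ‖a i‖ < ‖a i₀‖) :
    ‖∑ i ∈ s, a i‖ = ‖a i₀‖ := by
  rw [← Finset.add_sum_erase _ _ hi]
  rcases (s.erase i₀).eq_empty_or_nonempty with he | hne
  · rw [he]; simp
  · have hrest : ‖∑ i ∈ s.erase i₀, a i‖ < ‖a i₀‖ := by
      obtain ⟨i, hi', hle⟩ := IsUltrametricDist.exists_norm_finset_sum_le_of_nonempty hne a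
      exact lt_of_le_of_lt hle (h i (Finset.mem_of_mem_erase hi') (Finset.ne_of_mem_erase hi'))
    rw [add_comm, IsUltrametricDist.norm_add_eq_max_of_norm_ne_norm (ne_of_lt hrest)]
    exact max_eq_right (le_of_lt hrest)

/-- Every unit of the Tate algebra `F⟨t⟩` over a complete
non-archimedean field `F` is of the form `u · f(t)` with `u ∈ Fˣ`,
`f(0) = 1` and `‖f - 1‖ < 1` (Gauss norm). -/
theorem stmt7 (F : Type*) [NontriviallyNormedField F] [CompleteSpace F]
    (hF : ∀ x y : F, ‖x + y‖ ≤ max ‖x‖ ‖y‖)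
    (v : PowerSeries F) (hres : IsRestricted v)
    (hunit : ∃ g : PowerSeries F, IsRestricted g ∧ v * g = 1) :
    ∃ (u : Fˣ) (f : PowerSeries F), IsRestricted f ∧
      PowerSeries.constantCoeff f = 1 ∧ _root_.gaussNorm (f - 1) < 1 ∧
      v = PowerSeries.C (u : F) * f := by
  classical
  haveI : IsUltrametricDist F :=
    IsUltrametricDist.isUltrametricDist_of_forall_norm_add_le_max_norm hF
  obtain ⟨g, hgres, hvg⟩ := hunit
  have hv0 : v ≠ 0 := by rintro rfl; simp at hvg
  have hg0 : g ≠ 0 := by rintro rfl; simp at hvg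
  obtain ⟨N, hNle, hNlt⟩ := exists_max_index hres hv0
  obtain ⟨M, hMle, hMlt⟩ := exists_max_index hgres hg0
  have hcN : 0 < ‖PowerSeries.coeff N v‖ := by
    by_contra h
    push_neg at h
    apply hv0
    ext n
    have hn : ‖PowerSeries.coeff n v‖ ≤ 0 := le_trans (hNle n) h
    simpa using norm_le_zero_iff.mp hn
  have hdM : 0 < ‖PowerSeries.coeff M g‖ := by
    by_contra h
    push_neg at h
    apply hg0
    ext n
    have hn : ‖PowerSeries.coeff n g‖ ≤ 0 := le_trans (hMle n) h
    simpa using norm_le_zero_iff.mp hn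
  have hNzero : N = 0 := by
    by_contra hN
    have h1 : PowerSeries.coeff (N + M) (v * g) = 0 := by
      rw [hvg, PowerSeries.coeff_one]
      simp [Nat.add_eq_zero, hN]
    have h2 : ‖PowerSeries.coeff (N + M) (v * g)‖ =
        ‖PowerSeries.coeff N v‖ * ‖PowerSeries.coeff M g‖ := by
      rw [PowerSeries.coeff_mul]
      have hmem : ((N, M) : ℕ × ℕ) ∈ Finset.HasAntidiagonal.antidiagonal (N + M) :=
        Finset.HasAntidiagonal.mem_antidiagonal.mpr rfl
      rw [norm_sum_eq_dominant hmem ?_, norm_mul]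
      rintro ⟨i, j⟩ hij hne
      have hij' : i + j = N + M := Finset.HasAntidiagonal.mem_antidiagonal.mp hij
      show ‖PowerSeries.coeff i v * PowerSeries.coeff j g‖ <
        ‖PowerSeries.coeff N v * PowerSeries.coeff M g‖
      rw [norm_mul, norm_mul]
      rcases lt_or_ge N i with hNi | hNi
      · have hj : j ≤ M := by omega
        calc ‖PowerSeries.coeff i v‖ * ‖PowerSeries.coeff j g‖
            ≤ ‖PowerSeries.coeff i v‖ * ‖PowerSeries.coeff M g‖ := by
              gcongr; exact hMle j
          _ < ‖PowerSeries.coeff N v‖ * ‖PowerSeries.coeff M g‖ := by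
              exact mul_lt_mul_of_pos_right (hNlt i hNi) hdM
      · have hiN : i < N := by
          rcases lt_or_eq_of_le hNi with h | h
          · exact h
          · exfalso; apply hne; subst h; have : j = M := by omega
            subst this; rfl
        have hj : M < j := by omega
        calc ‖PowerSeries.coeff i v‖ * ‖PowerSeries.coeff j g‖
            ≤ ‖PowerSeries.coeff N v‖ * ‖PowerSeries.coeff j g‖ := by
              gcongr; exact hNle i
          _ < ‖PowerSeries.coeff N v‖ * ‖PowerSeries.coeff M g‖ :=
              mul_lt_mul_of_pos_left (hMlt j hj) hcN
    rw [h1, norm_zero] at h2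
    exact absurd h2.symm (ne_of_gt (mul_pos hcN hdM))
  subst hNzero
  have hc0 : PowerSeries.constantCoeff v ≠ 0 := by
    rw [← PowerSeries.coeff_zero_eq_constantCoeff_apply]
    exact norm_pos_iff.mp hcN
  set c₀ := PowerSeries.constantCoeff v with hc₀def
  refine ⟨Units.mk0 c₀ hc0, PowerSeries.C c₀⁻¹ * v, ?_, ?_, ?_, ?_⟩
  · -- IsRestricted
    have : Tendsto (fun k => ‖c₀⁻¹‖ * ‖PowerSeries.coeff k v‖) atTop (nhds (‖c₀⁻¹‖ * 0)) :=
      hres.const_mul _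
    rw [mul_zero] at this
    refine this.congr fun k => ?_
    rw [← norm_mul, ← PowerSeries.coeff_C_mul]
  · rw [map_mul, PowerSeries.constantCoeff_C, ← hc₀def, inv_mul_cancel₀ hc0]
  · -- Gauss norm bound
    set f := PowerSeries.C c₀⁻¹ * v with hfdef
    have hcoeff : ∀ k, ‖PowerSeries.coeff k (f - 1)‖ < 1 := by
      intro k
      rcases Nat.eq_zero_or_pos k with rfl | hk
      · have : PowerSeries.coeff 0 (f - 1) = 0 := by
          simp [hfdef, PowerSeries.coeff_zero_eq_constantCoeff_apply,
            inv_mul_cancel₀ hc0, ← hc₀def]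
        rw [this, norm_zero]; exact one_pos
      · have h1 : PowerSeries.coeff k (f - 1) = c₀⁻¹ * PowerSeries.coeff k v := by
          rw [map_sub, PowerSeries.coeff_one, if_neg hk.ne', sub_zero,
            hfdef, PowerSeries.coeff_C_mul]
        rw [h1, norm_mul, norm_inv]
        have hlt : ‖PowerSeries.coeff k v‖ < ‖c₀‖ := by
          have := hNlt k hk
          rwa [PowerSeries.coeff_zero_eq_constantCoeff_apply] at this
        have hc0n : 0 < ‖c₀‖ := norm_pos_iff.mpr hc0
        rw [inv_mul_lt_iff₀ hc0n, mul_one]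
        exact hlt
    rcases eq_or_ne (f - 1) 0 with hdiff | hdiff
    · rw [_root_.gaussNorm, hdiff]
      simp
    · have hfres : IsRestricted (f - 1) := by
        have hfres' : IsRestricted f := by
          have : Tendsto (fun k => ‖c₀⁻¹‖ * ‖PowerSeries.coeff k v‖) atTop
              (nhds (‖c₀⁻¹‖ * 0)) := hres.const_mul _
          rw [mul_zero] at this
          refine this.congr fun k => ?_
          rw [← norm_mul, ← PowerSeries.coeff_C_mul]
        refine hfres'.congr' ?_
        filter_upwards [Filter.eventually_atTop.mpr ⟨1, fun k hk => hk⟩] with k hk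
        rw [map_sub, PowerSeries.coeff_one, if_neg (by omega : ¬ k = 0), sub_zero]
      obtain ⟨N', hN'le, _⟩ := exists_max_index hfres hdiff
      calc _root_.gaussNorm (f - 1) ≤ ‖PowerSeries.coeff N' (f - 1)‖ := ciSup_le hN'le
        _ < 1 := hcoeff N'
  · rw [Units.val_mk0, ← mul_assoc, ← map_mul, mul_inv_cancel₀ hc0, map_one, one_mul]
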